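/- arXiv:2508.06812 — 3 statements merged into one kernel-verified Lean document; each statement's English description precedes it below -/
import Mathlib

section
/- Let p be an odd prime and G = D_p × D_p. In the superpower graph S_G, the degree of the identity element is 4p² − 1, the degree of each element of order 2 is 3p², the degree of each element of order 2p is 4p² − 1, and the degree of each element of order p is 3p² − 2p − 1. -/
def superpowerGraph (G : Type*) [Group G] : SimpleGraph G where
  Adj a b := a ≠ b ∧ (orderOf a ∣ orderOf b ∨ orderOf b ∣ orderOf a)
  symm := ⟨fun _ _ h => ⟨h.1.symm, h.2.symm⟩⟩
  loopless := ⟨fun _ h => h.1 rfl⟩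

noncomputable instance (G : Type*) [Group G] [DecidableEq G] :
    DecidableRel (superpowerGraph G).Adj :=
  fun _ _ => instDecidableAnd

open Finset

lemma prod_orderOf_dvd_iff {A B : Type*} [Monoid A] [Monoid B] (x : A × B) (n : ℕ) :
    orderOf x ∣ n ↔ orderOf x.1 ∣ n ∧ orderOf x.2 ∣ n := by
  rw [Prod.orderOf, Nat.lcm_dvd_iff]

lemma dih_order_dvd (p : ℕ) [NeZero p] (a : DihedralGroup p) : orderOf a ∣ 2 * p := by
  have h := orderOf_dvd_card (x := a)
  rwa [DihedralGroup.card] at h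

lemma dih_order_cases (p : ℕ) [NeZero p] (a : DihedralGroup p) :
    orderOf a ∣ p ∨ orderOf a = 2 := by
  cases a with
  | r i =>
      left
      rw [DihedralGroup.orderOf_r]
      exact Nat.div_dvd_of_dvd (Nat.gcd_dvd_left _ _)
  | sr i => right; exact DihedralGroup.orderOf_sr i

lemma dvd_two_mul_prime {p d : ℕ} (hp : p.Prime) (hp2 : p ≠ 2) (hd : d ∣ 2 * p) :
    d = 1 ∨ d = 2 ∨ d = p ∨ d = 2 * p := by
  by_cases h2 : 2 ∣ d
  · obtain ⟨e, rfl⟩ := h2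
    have he : e ∣ p := (Nat.mul_dvd_mul_iff_left (by norm_num : 0 < 2)).mp hd
    rcases hp.eq_one_or_self_of_dvd e he with rfl | rfl
    · right; left; norm_num
    · right; right; right; rfl
  · have hco : Nat.Coprime d 2 :=
      ((Nat.Prime.coprime_iff_not_dvd Nat.prime_two).mpr h2).symm
    have hdp : d ∣ p := hco.dvd_of_dvd_mul_left hd
    rcases hp.eq_one_or_self_of_dvd d hdp with rfl | rfl
    · left; rfl
    · right; right; left; rfl

lemma G_order_cases (p : ℕ) (hp : Fact p.Prime) (hp2 : p ≠ 2)
    (x : DihedralGroup p × DihedralGroup p) :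
    orderOf x = 1 ∨ orderOf x = 2 ∨ orderOf x = p ∨ orderOf x = 2 * p := by
  haveI : NeZero p := ⟨hp.out.ne_zero⟩
  have hd : orderOf x ∣ 2 * p :=
    (prod_orderOf_dvd_iff x (2 * p)).mpr ⟨dih_order_dvd p x.1, dih_order_dvd p x.2⟩
  exact dvd_two_mul_prime hp.out hp2 hd

lemma card_dvd_p (p : ℕ) (hp : Fact p.Prime) (hp2 : p ≠ 2) :
    (univ.filter (fun a : DihedralGroup p => orderOf a ∣ p)).card = p := by
  haveI : NeZero p := ⟨hp.out.ne_zero⟩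
  have himg : univ.filter (fun a : DihedralGroup p => orderOf a ∣ p)
      = univ.image DihedralGroup.r := by
    ext a
    simp only [mem_filter, mem_univ, true_and, mem_image]
    constructor
    · intro h
      cases a with
      | r i => exact ⟨i, rfl⟩
      | sr i =>
          rw [DihedralGroup.orderOf_sr] at h
          exact absurd ((Nat.prime_dvd_prime_iff_eq Nat.prime_two hp.out).mp h).symm hp2
    · rintro ⟨i, rfl⟩
      rw [DihedralGroup.orderOf_r]
      exact Nat.div_dvd_of_dvd (Nat.gcd_dvd_left _ _)
  rw [himg, card_image_of_injective _ (fun i j h => by injection h), card_univ, ZMod.card]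

lemma card_dvd_two (p : ℕ) (hp : Fact p.Prime) (hp2 : p ≠ 2) :
    (univ.filter (fun a : DihedralGroup p => orderOf a ∣ 2)).card = p + 1 := by
  haveI : NeZero p := ⟨hp.out.ne_zero⟩
  have hco : Nat.gcd 2 p = 1 :=
    (Nat.coprime_primes Nat.prime_two hp.out).mpr (fun h => hp2 h.symm)
  have hins : univ.filter (fun a : DihedralGroup p => orderOf a ∣ 2)
      = insert 1 (univ.image DihedralGroup.sr) := by
    ext a
    simp only [mem_filter, mem_univ, true_and, mem_insert, mem_image]
    constructor
    · intro h
      cases a with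
      | r i =>
          left
          have hdp : orderOf (DihedralGroup.r i) ∣ p := by
            rw [DihedralGroup.orderOf_r]
            exact Nat.div_dvd_of_dvd (Nat.gcd_dvd_left _ _)
          have h1 : orderOf (DihedralGroup.r i) = 1 :=
            Nat.dvd_one.mp (hco ▸ Nat.dvd_gcd h hdp)
          exact orderOf_eq_one_iff.mp h1
      | sr i => right; exact ⟨i, rfl⟩
    · rintro (rfl | ⟨i, rfl⟩)
      · simp
      · rw [DihedralGroup.orderOf_sr]
  rw [hins, card_insert_of_notMem, card_image_of_injective _ (fun i j h => by injection h),
    card_univ, ZMod.card]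
  simp only [mem_image, mem_univ, true_and, not_exists]
  intro i h
  rw [DihedralGroup.one_def] at h
  exact absurd h (by intro h'; injection h')

lemma card_order_eq_prime (p : ℕ) (hp : Fact p.Prime) (hp2 : p ≠ 2) (q : ℕ) (hq : q.Prime) :
    (univ.filter (fun x : DihedralGroup p × DihedralGroup p => orderOf x = q)).card
      = (univ.filter (fun a : DihedralGroup p => orderOf a ∣ q)).card *
        (univ.filter (fun a : DihedralGroup p => orderOf a ∣ q)).card - 1 := by
  have hset : univ.filter (fun x : DihedralGroup p × DihedralGroup p => orderOf x = q)
      = ((univ.filter (fun a : DihedralGroup p => orderOf a ∣ q)) ×ˢ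
         (univ.filter (fun a : DihedralGroup p => orderOf a ∣ q))).erase 1 := by
    ext x
    simp only [mem_filter, mem_univ, true_and, mem_erase, mem_product]
    constructor
    · intro h
      have hdvd : orderOf x ∣ q := h ▸ dvd_rfl
      have hcomp := (prod_orderOf_dvd_iff x q).mp hdvd
      refine ⟨fun h1 => ?_, hcomp.1, hcomp.2⟩
      rw [h1, orderOf_one] at h
      exact hq.ne_one h.symm
    · rintro ⟨h1, ha, hb⟩
      have hdvd : orderOf x ∣ q := (prod_orderOf_dvd_iff x q).mpr ⟨ha, hb⟩
      rcases hq.eq_one_or_self_of_dvd _ hdvd with h | h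
      · exact absurd (orderOf_eq_one_iff.mp h) h1
      · exact h
  rw [hset, card_erase_of_mem, card_product]
  simp only [mem_product, mem_filter, mem_univ, true_and]
  exact ⟨by rw [Prod.fst_one, orderOf_one]; exact one_dvd q,
    by rw [Prod.snd_one, orderOf_one]; exact one_dvd q⟩

lemma deg_aux {G : Type*} [Group G] [Fintype G] [DecidableEq G] (g : G) (T : Finset G)
    (hg : g ∉ T)
    (h : ∀ b, ((superpowerGraph G).Adj g b ↔ b ≠ g ∧ b ∉ T)) :
    (superpowerGraph G).degree g = Fintype.card G - T.card - 1 := by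
  have hfe : (superpowerGraph G).neighborFinset g = (univ \ T).erase g := by
    ext b
    rw [SimpleGraph.mem_neighborFinset, h b, mem_erase, mem_sdiff]
    simp only [mem_univ, true_and]
  rw [SimpleGraph.degree, hfe, card_erase_of_mem (by simp [hg]), card_sdiff_of_subset (subset_univ T),
    card_univ]

theorem stmt4 (p : ℕ) (hp : Fact p.Prime) (hp2 : p ≠ 2) :
    (superpowerGraph (DihedralGroup p × DihedralGroup p)).degree 1 = 4 * p ^ 2 - 1 ∧
    (∀ g : DihedralGroup p × DihedralGroup p, orderOf g = 2 →
      (superpowerGraph _).degree g = 3 * p ^ 2) ∧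
    (∀ g : DihedralGroup p × DihedralGroup p, orderOf g = 2 * p →
      (superpowerGraph _).degree g = 4 * p ^ 2 - 1) ∧
    (∀ g : DihedralGroup p × DihedralGroup p, orderOf g = p →
      (superpowerGraph _).degree g = 3 * p ^ 2 - 2 * p - 1) := by
  haveI : NeZero p := ⟨hp.out.ne_zero⟩
  have hp3 : 3 ≤ p := by
    rcases hp.out.two_le.lt_or_eq with h | h
    · omega
    · exact absurd h.symm hp2
  have hcardG : Fintype.card (DihedralGroup p × DihedralGroup p) = 4 * p ^ 2 := by
    rw [Fintype.card_prod, DihedralGroup.card]; ring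
  have hp_ndvd2 : ¬ p ∣ 2 := fun h => by
    have := Nat.le_of_dvd (by norm_num) h
    omega
  have h2_ndvd_p : ¬ (2 : ℕ) ∣ p := fun h =>
    hp2 ((Nat.prime_dvd_prime_iff_eq Nat.prime_two hp.out).mp h).symm
  -- degrees
  have hcard_op : (univ.filter
      (fun x : DihedralGroup p × DihedralGroup p => orderOf x = p)).card = p * p - 1 := by
    rw [card_order_eq_prime p hp hp2 p hp.out, card_dvd_p p hp hp2]
  have hcard_o2 : (univ.filter
      (fun x : DihedralGroup p × DihedralGroup p => orderOf x = 2)).card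
      = (p + 1) * (p + 1) - 1 := by
    rw [card_order_eq_prime p hp hp2 2 Nat.prime_two, card_dvd_two p hp hp2]
  refine ⟨?_, ?_, ?_, ?_⟩
  · -- identity
    have := deg_aux (1 : DihedralGroup p × DihedralGroup p) ∅ (notMem_empty 1) (fun b => by
      constructor
      · rintro ⟨hne, -⟩; exact ⟨fun h => hne h.symm, notMem_empty b⟩
      · rintro ⟨hne, -⟩
        exact ⟨fun h => hne h.symm, Or.inl (by rw [orderOf_one]; exact one_dvd _)⟩)
    rw [this, hcardG, card_empty]
    omega
  · -- order 2
    intro g hg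
    have hgT : g ∉ univ.filter (fun x : DihedralGroup p × DihedralGroup p => orderOf x = p) := by
      simp only [mem_filter, mem_univ, true_and, hg]
      omega
    have hadj : ∀ b, ((superpowerGraph _).Adj g b ↔ b ≠ g ∧
        b ∉ univ.filter (fun x : DihedralGroup p × DihedralGroup p => orderOf x = p)) := by
      intro b
      simp only [superpowerGraph, ne_eq, mem_filter, mem_univ, true_and]
      rw [hg]
      constructor
      · rintro ⟨hne, hcond⟩
        refine ⟨fun h => hne h.symm, fun hb => ?_⟩
        rw [hb] at hcond
        rcases hcond with h | h
        · exact h2_ndvd_p h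
        · exact hp_ndvd2 h
      · rintro ⟨hne, hb⟩
        refine ⟨fun h => hne h.symm, ?_⟩
        rcases G_order_cases p hp hp2 b with h | h | h | h
        · right; rw [h]; exact one_dvd 2
        · right; rw [h]
        · exact absurd h hb
        · left; rw [h]; exact Dvd.intro p rfl
    rw [deg_aux g _ hgT hadj, hcardG, hcard_op]
    have hq1 : 1 ≤ p * p := Nat.one_le_iff_ne_zero.mpr (by positivity)
    have hqe : p ^ 2 = p * p := sq p
    obtain ⟨q, hq⟩ : ∃ q, p * p = q := ⟨_, rfl⟩
    rw [hqe, hq] at *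
    omega
  · -- order 2p
    intro g hg
    have := deg_aux g ∅ (notMem_empty g) (fun b => by
      simp only [superpowerGraph, ne_eq, notMem_empty, not_false_iff, and_true]
      constructor
      · rintro ⟨hne, _⟩; exact fun h => hne h.symm
      · intro hne
        refine ⟨fun h => hne h.symm, Or.inr ?_⟩
        rw [hg]
        exact (prod_orderOf_dvd_iff b (2 * p)).mpr ⟨dih_order_dvd p b.1, dih_order_dvd p b.2⟩)
    rw [this, hcardG, card_empty]
    omega
  · -- order p
    intro g hg
    have hgT : g ∉ univ.filter (fun x : DihedralGroup p × DihedralGroup p => orderOf x = 2) := by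
      simp only [mem_filter, mem_univ, true_and, hg]
      omega
    have hadj : ∀ b, ((superpowerGraph _).Adj g b ↔ b ≠ g ∧
        b ∉ univ.filter (fun x : DihedralGroup p × DihedralGroup p => orderOf x = 2)) := by
      intro b
      simp only [superpowerGraph, ne_eq, mem_filter, mem_univ, true_and]
      rw [hg]
      constructor
      · rintro ⟨hne, hcond⟩
        refine ⟨fun h => hne h.symm, fun hb => ?_⟩
        rw [hb] at hcond
        rcases hcond with h | h
        · exact hp_ndvd2 h
        · exact h2_ndvd_p h
      · rintro ⟨hne, hb⟩
        refine ⟨fun h => hne h.symm, ?_⟩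
        rcases G_order_cases p hp hp2 b with h | h | h | h
        · right; rw [h]; exact one_dvd p
        · exact absurd h hb
        · right; rw [h]
        · left; rw [h]; exact ⟨2, by ring⟩
    rw [deg_aux g _ hgT hadj, hcardG, hcard_o2]
    have h3 : 2 * p + 1 ≤ 3 * p ^ 2 := by nlinarith
    have hqe : (p + 1) * (p + 1) = p ^ 2 + 2 * p + 1 := by ring
    obtain ⟨q, hq⟩ : ∃ q, p ^ 2 = q := ⟨_, rfl⟩
    rw [hqe, hq] at *
    omega
end

section
/- Let p be an odd prime and G = D_p × D_p. Then 3p² − 2p is an eigenvalue of the Laplacian matrix of the superpower graph S_G with multiplicity at least p² − 2. -/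
open Polynomial Matrix Finset DihedralGroup

lemma charpoly_shift {R : Type*} [CommRing R] {m : Type*} [Fintype m] [DecidableEq m]
    (M : Matrix m m R) (μ : R) :
    (M - μ • (1 : Matrix m m R)).charpoly = M.charpoly.comp (X + C μ) := by
  have h : M.charpoly.comp (X + C μ)
      = Polynomial.eval₂RingHom (C : R →+* R[X]) (X + C μ) M.charpoly := rfl
  rw [h]
  simp only [Matrix.charpoly]
  rw [RingHom.map_det]
  refine congrArg Matrix.det (Matrix.ext fun i j => ?_)
  rw [RingHom.mapMatrix_apply, Matrix.map_apply]
  by_cases hij : i = j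
  · subst hij
    simp only [charmatrix_apply_eq, Matrix.map_apply, Matrix.sub_apply, Matrix.smul_apply,
      Matrix.one_apply_eq, smul_eq_mul, mul_one, coe_eval₂RingHom, eval₂_sub, eval₂_X, eval₂_C,
      C_sub]
    ring
  · simp only [charmatrix_apply_ne _ _ _ hij, Matrix.map_apply, Matrix.sub_apply,
      Matrix.smul_apply, Matrix.one_apply_ne hij, smul_eq_mul, mul_zero, sub_zero,
      coe_eval₂RingHom, eval₂_neg, eval₂_C]

lemma card_le_rootMultiplicity {m : Type*} [Fintype m] [DecidableEq m]
    (M : Matrix m m ℝ) (μ : ℝ) {ι : Type*} [Fintype ι]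
    (v : ι → m → ℝ) (hv : LinearIndependent ℝ v)
    (hev : ∀ i, M.mulVec (v i) = μ • v i) :
    Fintype.card ι ≤ M.charpoly.rootMultiplicity μ := by
  rw [Polynomial.rootMultiplicity_eq_natTrailingDegree, ← charpoly_shift]
  set N := M - μ • (1 : Matrix m m ℝ) with hNdef
  have hN : N.charpoly = (Matrix.toLin' N).charpoly := by
    rw [← LinearMap.charpoly_toMatrix (Matrix.toLin' N) (Pi.basisFun ℝ m),
      LinearMap.toMatrix_eq_toMatrix', LinearMap.toMatrix'_toLin']
  rw [hN, ← LinearMap.finrank_maxGenEigenspace_zero_eq]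
  set V := Module.End.maxGenEigenspace (Matrix.toLin' N) 0 with hV
  have hmem : ∀ i, v i ∈ V := by
    intro i
    rw [hV, Module.End.mem_maxGenEigenspace]
    refine ⟨1, ?_⟩
    simp only [zero_smul, sub_zero, pow_one]
    rw [Matrix.toLin'_apply, hNdef, Matrix.sub_mulVec, hev i, Matrix.smul_mulVec,
      Matrix.one_mulVec, sub_self]
  let w : ι → V := fun i => ⟨v i, hmem i⟩
  have hw : LinearIndependent ℝ w := LinearIndependent.of_comp V.subtype hv
  exact hw.fintype_card_le_finrank

lemma li_single_sub {α : Type*} [Fintype α] [DecidableEq α] {ι : Type*} [Fintype ι]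
    (g : ι → α) (u : α) (hg : Function.Injective g) (hu : ∀ i, g i ≠ u) :
    LinearIndependent ℝ (fun i => (Pi.single (g i) 1 : α → ℝ) - Pi.single u 1) := by
  classical
  rw [Fintype.linearIndependent_iff]
  intro c hc i
  have h := congrFun hc (g i)
  simp only [Finset.sum_apply, Pi.smul_apply, Pi.sub_apply, Pi.single_apply, smul_eq_mul,
    Pi.zero_apply, hg.eq_iff] at h
  rw [Finset.sum_congr rfl (fun j _ => by
    rw [if_neg (fun hh : g i = u => hu i hh), sub_zero])] at h
  have h2 : (∑ x : ι, c x * if i = x then (1:ℝ) else 0) = c i := by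
    simp [mul_ite, Finset.sum_ite_eq]
  exact h2.symm.trans h

section dihedral
variable (p : ℕ) [hp : Fact p.Prime]

lemma adj_iff {H : Type*} [Group H] (a b : H) :
    (superpowerGraph H).Adj a b ↔ a ≠ b ∧ (orderOf a ∣ orderOf b ∨ orderOf b ∣ orderOf a) :=
  Iff.rfl

lemma orderOf_r' (a : ZMod p) (ha : a ≠ 0) : orderOf (DihedralGroup.r a) = p := by
  rw [DihedralGroup.orderOf_r]
  have hval : a.val ≠ 0 := fun h => ha ((ZMod.val_eq_zero a).mp h)
  have hlt : a.val < p := ZMod.val_lt a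
  have : Nat.gcd p a.val = 1 := by
    apply Nat.Coprime.gcd_eq_one
    exact (Nat.Prime.coprime_iff_not_dvd hp.out).mpr
      (fun h => absurd (Nat.le_of_dvd (Nat.pos_of_ne_zero hval) h) (not_le.mpr hlt))
  rw [this, Nat.div_one]

lemma orderOf_r_zero : orderOf (DihedralGroup.r (0 : ZMod p)) = 1 := by
  rw [← DihedralGroup.one_def, orderOf_one]

lemma orderOf_pair (a b : ZMod p) (h : ¬(a = 0 ∧ b = 0)) :
    orderOf ((DihedralGroup.r a, DihedralGroup.r b) :
      DihedralGroup p × DihedralGroup p) = p := by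
  rw [Prod.orderOf_mk]
  by_cases ha : a = 0
  · have hb : b ≠ 0 := fun hb => h ⟨ha, hb⟩
    rw [ha, orderOf_r_zero, orderOf_r' p b hb, Nat.lcm_one_left]
  · by_cases hb : b = 0
    · rw [hb, orderOf_r_zero, orderOf_r' p a ha, Nat.lcm_one_right]
    · rw [orderOf_r' p a ha, orderOf_r' p b hb, Nat.lcm_self]

lemma filter_not_dvd_card (hp2 : p ≠ 2) :
    ((univ : Finset (DihedralGroup p)).filter fun w => ¬ p ∣ orderOf w).card = p + 1 := by
  have hss : ((univ : Finset (DihedralGroup p)).filter fun w => ¬ p ∣ orderOf w)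
      = insert (DihedralGroup.r 0) (univ.image DihedralGroup.sr) := by
    ext w
    simp only [mem_filter, mem_univ, true_and, mem_insert, mem_image]
    cases w with
    | r i =>
      by_cases hi : i = 0
      · subst hi
        rw [orderOf_r_zero]
        simp only [Nat.dvd_one]
        constructor
        · intro _; exact Or.inl (by trivial)
        · intro _; exact hp.out.ne_one
      · rw [orderOf_r' p i hi]
        constructor
        · intro hcon; exact absurd (dvd_refl p) hcon
        · rintro (hcon | ⟨j, hj⟩)
          · injection hcon with h; exact absurd h hi
          · cases hj
    | sr i =>
      rw [DihedralGroup.orderOf_sr]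
      have : ¬ p ∣ 2 := fun hdvd =>
        hp2 ((Nat.prime_dvd_prime_iff_eq hp.out Nat.prime_two).mp hdvd)
      simp only [this, not_false_iff, true_iff]
      exact Or.inr ⟨i, rfl⟩
  rw [hss, Finset.card_insert_of_notMem, Finset.card_image_of_injective _
    (fun a b hab => by injection hab), Finset.card_univ, ZMod.card, Nat.add_comm]
  simp only [mem_image, mem_univ, true_and, not_exists]
  intro j hj
  cases hj

end dihedral

section part2
variable (p : ℕ) [hp : Fact p.Prime]

lemma dvd_orderOf_prod (w : DihedralGroup p × DihedralGroup p) :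
    p ∣ orderOf w ↔ p ∣ orderOf w.1 ∨ p ∣ orderOf w.2 := by
  rw [Prod.orderOf]
  constructor
  · intro h
    exact (Nat.Prime.dvd_mul hp.out).mp (h.trans (Nat.lcm_dvd_mul _ _))
  · rintro (h | h)
    · exact h.trans (Nat.dvd_lcm_left _ _)
    · exact h.trans (Nat.dvd_lcm_right _ _)

lemma cardP (hp2 : p ≠ 2) :
    ((univ : Finset (DihedralGroup p × DihedralGroup p)).filter
      fun w => p ∣ orderOf w).card + (p+1)^2 = 4*p^2 := by
  classical
  have hsplit := Finset.card_filter_add_card_filter_not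
    (s := (univ : Finset (DihedralGroup p × DihedralGroup p)))
    (p := fun w => p ∣ orderOf w)
  have hneg : ((univ : Finset (DihedralGroup p × DihedralGroup p)).filter
      fun w => ¬ p ∣ orderOf w).card = (p+1)^2 := by
    have h1 : ((univ : Finset (DihedralGroup p × DihedralGroup p)).filter
        fun w => ¬ p ∣ orderOf w)
        = ((univ : Finset (DihedralGroup p)).filter fun w => ¬ p ∣ orderOf w) ×ˢ
          ((univ : Finset (DihedralGroup p)).filter fun w => ¬ p ∣ orderOf w) := by
      rw [Finset.filter_congr (fun w _ => by
        rw [dvd_orderOf_prod p w]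
        push_neg
        rfl : ∀ w ∈ (univ : Finset (DihedralGroup p × DihedralGroup p)),
          (¬ p ∣ orderOf w) ↔ ((¬ p ∣ orderOf w.1) ∧ (¬ p ∣ orderOf w.2)))]
      rw [← Finset.univ_product_univ]
      exact Finset.filter_product (fun a => ¬ p ∣ orderOf a) (fun a => ¬ p ∣ orderOf a)
    rw [h1, Finset.card_product, filter_not_dvd_card p hp2]
    ring
  rw [hneg, Finset.card_univ, Fintype.card_prod, DihedralGroup.card] at hsplit
  rw [hsplit]
  ring

lemma degree_eq (hp2 : p ≠ 2) (x : DihedralGroup p × DihedralGroup p)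
    (hx : orderOf x = p) :
    (superpowerGraph (DihedralGroup p × DihedralGroup p)).degree x + (p+1)^2 = 4*p^2 := by
  classical
  rw [SimpleGraph.degree, SimpleGraph.neighborFinset_eq_filter]
  have hx1 : x ≠ 1 := by
    intro h
    rw [h, orderOf_one] at hx
    exact hp.out.ne_one hx.symm
  have hfe : ((univ : Finset (DihedralGroup p × DihedralGroup p)).filter
        ((superpowerGraph _).Adj x))
      = (insert (1 : DihedralGroup p × DihedralGroup p)
          ((univ : Finset (DihedralGroup p × DihedralGroup p)).filter
            fun w => p ∣ orderOf w)).erase x := by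
    ext w
    simp only [mem_filter, mem_univ, true_and, mem_erase, mem_insert]
    rw [adj_iff, hx]
    constructor
    · rintro ⟨hxw, (h | h)⟩
      · exact ⟨Ne.symm hxw, Or.inr h⟩
      · rcases hp.out.eq_one_or_self_of_dvd _ h with h1 | h1
        · exact ⟨Ne.symm hxw, Or.inl (orderOf_eq_one_iff.mp h1)⟩
        · exact ⟨Ne.symm hxw, Or.inr (by rw [h1])⟩
    · rintro ⟨hwx, (rfl | h)⟩
      · exact ⟨Ne.symm hwx, Or.inr (by rw [orderOf_one]; exact one_dvd p)⟩
      · exact ⟨Ne.symm hwx, Or.inl h⟩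
  rw [hfe, Finset.card_erase_of_mem (Finset.mem_insert_of_mem (by
      simp only [mem_filter, mem_univ, true_and]; rw [hx])),
    Finset.card_insert_of_notMem (by
      simp only [mem_filter, mem_univ, true_and, orderOf_one, Nat.dvd_one]
      exact hp.out.ne_one)]
  have hc := cardP p hp2
  omega

lemma eig (hp2 : p ≠ 2) (x u : DihedralGroup p × DihedralGroup p)
    (hx : orderOf x = p) (hu : orderOf u = p) (hxu : x ≠ u) :
    (Matrix.diagonal (fun v : DihedralGroup p × DihedralGroup p =>
        ((superpowerGraph _).degree v : ℝ)) -
      (superpowerGraph (DihedralGroup p × DihedralGroup p)).adjMatrix ℝ).mulVec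
        (Pi.single x 1 - Pi.single u 1)
    = (((superpowerGraph (DihedralGroup p × DihedralGroup p)).degree x : ℝ) + 1) •
        (Pi.single x 1 - Pi.single u 1) := by
  classical
  have SG := superpowerGraph (DihedralGroup p × DihedralGroup p)
  have hdeg : (superpowerGraph (DihedralGroup p × DihedralGroup p)).degree u
      = (superpowerGraph (DihedralGroup p × DihedralGroup p)).degree x := by
    have h1 := degree_eq p hp2 x hx
    have h2 := degree_eq p hp2 u hu
    omega
  funext w
  rw [Matrix.sub_mulVec]
  simp only [Pi.sub_apply, Matrix.mulVec_diagonal, SimpleGraph.adjMatrix_mulVec_apply,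
    Pi.smul_apply, smul_eq_mul]
  have hsum : ∀ a : DihedralGroup p × DihedralGroup p,
      (∑ y ∈ (superpowerGraph (DihedralGroup p × DihedralGroup p)).neighborFinset w, (Pi.single a (1:ℝ)) y)
        = if a ∈ (superpowerGraph (DihedralGroup p × DihedralGroup p)).neighborFinset w then 1 else 0 := by
    intro a
    simp only [Pi.single_apply]
    exact Finset.sum_ite_eq' _ a (fun _ => (1:ℝ))
  rw [Finset.sum_sub_distrib, hsum x, hsum u]
  by_cases hwx : w = x
  · subst hwx
    have h1 : w ∉ (superpowerGraph (DihedralGroup p × DihedralGroup p)).neighborFinset w := by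
      simp [SimpleGraph.mem_neighborFinset]
    have h2 : u ∈ (superpowerGraph (DihedralGroup p × DihedralGroup p)).neighborFinset w := by
      rw [SimpleGraph.mem_neighborFinset]
      exact ⟨hxu, Or.inl (by rw [hx, hu])⟩
    rw [if_neg h1, if_pos h2, Pi.single_eq_same, Pi.single_eq_of_ne hxu]
    ring
  · by_cases hwu : w = u
    · subst hwu
      have h1 : w ∉ (superpowerGraph (DihedralGroup p × DihedralGroup p)).neighborFinset w := by
        simp [SimpleGraph.mem_neighborFinset]
      have h2 : x ∈ (superpowerGraph (DihedralGroup p × DihedralGroup p)).neighborFinset w := by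
        rw [SimpleGraph.mem_neighborFinset]
        exact ⟨Ne.symm hxu, Or.inl (by rw [hx, hu])⟩
      rw [if_pos h2, if_neg h1, Pi.single_eq_same, Pi.single_eq_of_ne (Ne.symm hxu), hdeg]
      ring
    · have h3 : (x ∈ (superpowerGraph (DihedralGroup p × DihedralGroup p)).neighborFinset w)
          ↔ (u ∈ (superpowerGraph (DihedralGroup p × DihedralGroup p)).neighborFinset w) := by
        simp only [SimpleGraph.mem_neighborFinset]
        rw [adj_iff, adj_iff, hx, hu]
        exact and_congr_left' ⟨fun _ => hwu, fun _ => hwx⟩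
      have h4 : (if x ∈ (superpowerGraph (DihedralGroup p × DihedralGroup p)).neighborFinset w
            then (1:ℝ) else 0)
          = (if u ∈ (superpowerGraph (DihedralGroup p × DihedralGroup p)).neighborFinset w
            then (1:ℝ) else 0) := if_congr h3 rfl rfl
      rw [Pi.single_eq_of_ne hwx, Pi.single_eq_of_ne hwu, h4]
      ring

end part2

theorem stmt8 (p : ℕ) (hp : Fact p.Prime) (hp2 : p ≠ 2) :
    p ^ 2 - 2 ≤
      Polynomial.rootMultiplicity (3 * (p : ℝ) ^ 2 - 2 * p)
        (Matrix.charpoly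
          (Matrix.diagonal
              (fun v : DihedralGroup p × DihedralGroup p =>
                ((superpowerGraph _).degree v : ℝ)) -
            (superpowerGraph (DihedralGroup p × DihedralGroup p)).adjMatrix ℝ)) := by
  classical
  haveI := hp
  haveI : Fact (1 < p) := ⟨hp.out.one_lt⟩
  set s : Finset (ZMod p × ZMod p) :=
    univ \ {((0 : ZMod p), (0 : ZMod p)), ((1 : ZMod p), (0 : ZMod p))} with hs
  set u : DihedralGroup p × DihedralGroup p :=
    (DihedralGroup.r 1, DihedralGroup.r 0) with hudef
  have hou : orderOf u = p := orderOf_pair p 1 0 (fun h => one_ne_zero h.1)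
  set g : ↥s → DihedralGroup p × DihedralGroup p :=
    fun ab => (DihedralGroup.r ab.1.1, DihedralGroup.r ab.1.2) with hgdef
  have hmem : ∀ i : ↥s, i.1 ≠ ((0 : ZMod p), (0 : ZMod p)) ∧
      i.1 ≠ ((1 : ZMod p), (0 : ZMod p)) := by
    intro i
    have h := i.2
    simp only [hs, Finset.mem_sdiff, Finset.mem_univ, true_and, Finset.mem_insert,
      Finset.mem_singleton] at h
    push_neg at h
    exact h
  have hg : Function.Injective g := by
    intro a b hab
    rw [hgdef] at hab
    simp only [Prod.mk.injEq] at hab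
    obtain ⟨h1, h2⟩ := hab
    injection h1 with h1
    injection h2 with h2
    exact Subtype.ext (Prod.ext h1 h2)
  have hgu : ∀ i, g i ≠ u := by
    intro i h
    rw [hgdef, hudef] at h
    simp only [Prod.mk.injEq] at h
    obtain ⟨h1, h2⟩ := h
    injection h1 with h1
    injection h2 with h2
    exact (hmem i).2 (Prod.ext h1 h2)
  have hog : ∀ i, orderOf (g i) = p := by
    intro i
    refine orderOf_pair p _ _ (fun h => (hmem i).1 (Prod.ext h.1 h.2))
  have hcard : Fintype.card ↥s = p ^ 2 - 2 := by
    rw [Fintype.card_coe, hs, Finset.card_sdiff_of_subset (Finset.subset_univ _)]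
    have h2 : ({((0 : ZMod p), (0 : ZMod p)), ((1 : ZMod p), (0 : ZMod p))} :
        Finset (ZMod p × ZMod p)).card = 2 := by
      rw [Finset.card_insert_of_notMem (by
        simp only [Finset.mem_singleton]
        exact fun h => one_ne_zero (congrArg Prod.fst h).symm), Finset.card_singleton]
    rw [h2, Finset.card_univ, Fintype.card_prod, ZMod.card]
    have hsq : p ^ 2 = p * p := sq p
    omega
  rw [← hcard]
  apply card_le_rootMultiplicity _ _
    (fun i => (Pi.single (g i) 1 : DihedralGroup p × DihedralGroup p → ℝ) - Pi.single u 1)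
    (li_single_sub g u hg hgu)
  intro i
  have heig := eig p hp2 (g i) u (hog i) hou (hgu i)
  rw [heig]
  have hde := degree_eq p hp2 (g i) (hog i)
  have hde' : ((superpowerGraph (DihedralGroup p × DihedralGroup p)).degree (g i) : ℝ)
      + ((p : ℝ) + 1) ^ 2 = 4 * (p : ℝ) ^ 2 := by exact_mod_cast hde
  have : ((superpowerGraph (DihedralGroup p × DihedralGroup p)).degree (g i) : ℝ) + 1
      = 3 * (p : ℝ) ^ 2 - 2 * p := by linear_combination hde'
  rw [this]
end

section
/- Let p be an odd prime and G = D_p × D_p. Then −1 is an eigenvalue of the adjacency matrix of the superpower graph S_G with multiplicity at least 4p² − 4. -/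
open Polynomial Matrix

section WA

variable {F : Type*} [Field F]

lemma charpoly_algebraMap_det {n : Type*} [Fintype n] [DecidableEq n] (M : Matrix n n F) :
    algebraMap F[X] (FractionRing F[X]) M.charpoly =
      (Matrix.diagonal (fun _ : n => algebraMap F[X] (FractionRing F[X]) X)
        - M.map ((algebraMap F[X] (FractionRing F[X])).comp C)).det := by
  rw [Matrix.charpoly, RingHom.map_det]
  congr 1
  ext i j
  by_cases hij : i = j
  · subst hij
    simp [charmatrix_apply_eq, Matrix.map_apply]
  · simp [charmatrix_apply_ne _ _ _ hij, Matrix.map_apply, Matrix.diagonal_apply_ne _ hij]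

lemma det_diag_sub_mul {K : Type*} [Field K] {a b : Type*} [Fintype a] [Fintype b]
    [DecidableEq a] [DecidableEq b] {x : K} (hx0 : x ≠ 0) (A : Matrix a b K) (B : Matrix b a K) :
    (Matrix.diagonal (fun _ : a => x) - A * B).det
      = x ^ (Fintype.card a) * (1 - x⁻¹ • (B * A)).det := by
  have h1 : Matrix.diagonal (fun _ : a => x) - A * B = x • ((1 : Matrix a a K) - x⁻¹ • (A * B)) := by
    rw [smul_sub, smul_one_eq_diagonal, smul_smul, mul_inv_cancel₀ hx0, one_smul]
  have h2 : (1 : Matrix a a K) - x⁻¹ • (A * B) = 1 - (x⁻¹ • A) * B := by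
    rw [Matrix.smul_mul]
  rw [h1, det_smul, h2, det_one_sub_mul_comm, Matrix.mul_smul]

lemma wa_dvd {m k : Type*} [Fintype m] [Fintype k] [DecidableEq m] [DecidableEq k]
    (hcard : Fintype.card k ≤ Fintype.card m) (U : Matrix m k F) (V : Matrix k m F) :
    (X : F[X]) ^ (Fintype.card m - Fintype.card k) ∣ (U * V).charpoly := by
  classical
  set K := FractionRing F[X]
  set ψ : F[X] →+* K := (algebraMap F[X] K : F[X] →+* K) with hψ
  have hinj : Function.Injective ψ := IsFractionRing.injective _ _
  set x : K := ψ X with hx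
  have hx0 : x ≠ 0 := by
    intro h0
    exact X_ne_zero (hinj (by simpa using h0))
  set ρ : F →+* K := ψ.comp (C : F →+* F[X]) with hρ
  set U' : Matrix m k K := U.map ρ with hU'
  set V' : Matrix k m K := V.map ρ with hV'
  have hmapUV : (U * V).map ρ = U' * V' := Matrix.map_mul
  have hmapVU : (V * U).map ρ = V' * U' := Matrix.map_mul
  have main : (X : F[X]) ^ (Fintype.card k) * (U * V).charpoly
      = (X : F[X]) ^ (Fintype.card m) * (V * U).charpoly := by
    apply hinj
    rw [_root_.map_mul, _root_.map_mul, map_pow, map_pow, charpoly_algebraMap_det, charpoly_algebraMap_det]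
    rw [← hx, ← hρ, hmapUV, hmapVU, det_diag_sub_mul hx0 U' V', det_diag_sub_mul hx0 V' U']
    have hbridge : ((1 : Matrix m m K) - x⁻¹ • (U' * V')).det
        = ((1 : Matrix k k K) - x⁻¹ • (V' * U')).det := by
      rw [show (1 : Matrix m m K) - x⁻¹ • (U' * V') = 1 - (x⁻¹ • U') * V' from by
        rw [Matrix.smul_mul], det_one_sub_mul_comm, Matrix.mul_smul]
    rw [hbridge]
    ring
  have hsplit : (X : F[X]) ^ (Fintype.card m)
      = (X : F[X]) ^ (Fintype.card k) * X ^ (Fintype.card m - Fintype.card k) := by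
    rw [← pow_add]
    congr 1
    omega
  rw [hsplit, mul_assoc] at main
  have := mul_left_cancel₀ (pow_ne_zero _ (X_ne_zero : (X : F[X]) ≠ 0)) main
  exact ⟨(V * U).charpoly, this⟩

lemma charpoly_sub_one {n : Type*} [Fintype n] [DecidableEq n] (M : Matrix n n F) :
    (M - 1).charpoly = M.charpoly.comp (X + 1) := by
  have hφ : ∀ q : F[X], q.comp (X + 1) = eval₂RingHom C (X + 1 : F[X]) q := fun q => rfl
  rw [Matrix.charpoly, Matrix.charpoly, hφ, RingHom.map_det]
  congr 1
  ext i j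
  simp only [RingHom.mapMatrix_apply, Matrix.map_apply, coe_eval₂RingHom]
  by_cases hij : i = j
  · subst hij
    have h3 : eval₂ C (X + 1 : F[X]) (X - C (M i i)) = X + 1 - C (M i i) := by
      simp
    rw [charmatrix_apply_eq, charmatrix_apply_eq, h3, Matrix.sub_apply, Matrix.one_apply_eq,
      map_sub, _root_.map_one]
    ring
  · have h3 : eval₂ C (X + 1 : F[X]) (-C (M i j)) = -C (M i j) := by
      simp
    rw [charmatrix_apply_ne _ _ _ hij, charmatrix_apply_ne _ _ _ hij, h3, Matrix.sub_apply,
      Matrix.one_apply_ne hij, sub_zero]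

end WA

section Arith

lemma divisor_cases {p a : ℕ} (hp : p.Prime) (hp2 : p ≠ 2) (ha : a ∣ 2 * p) :
    a = 1 ∨ a = 2 ∨ a = p ∨ a = 2 * p := by
  by_cases h2 : 2 ∣ a <;> by_cases hpa : p ∣ a
  · right; right; right
    exact Nat.dvd_antisymm ha
      (Nat.Coprime.mul_dvd_of_dvd_of_dvd
        ((Nat.coprime_primes Nat.prime_two hp).2 (fun h => hp2 h.symm)) h2 hpa)
  · have hcop : Nat.Coprime a p := ((Nat.Prime.coprime_iff_not_dvd hp).2 hpa).symm
    have h2' : a ∣ 2 := hcop.dvd_of_dvd_mul_right ha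
    rcases (Nat.prime_two.eq_one_or_self_of_dvd a h2') with h | h
    · exact Or.inl h
    · exact Or.inr (Or.inl h)
  · have hcop : Nat.Coprime a 2 := ((Nat.Prime.coprime_iff_not_dvd Nat.prime_two).2 h2).symm
    have hap : a ∣ p := hcop.dvd_of_dvd_mul_left ha
    rcases hp.eq_one_or_self_of_dvd a hap with h | h
    · exact Or.inl h
    · exact Or.inr (Or.inr (Or.inl h))
  · have hcop : Nat.Coprime a 2 := ((Nat.Prime.coprime_iff_not_dvd Nat.prime_two).2 h2).symm
    have hap : a ∣ p := hcop.dvd_of_dvd_mul_left ha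
    rcases hp.eq_one_or_self_of_dvd a hap with h | h
    · exact Or.inl h
    · exact absurd (h ▸ dvd_rfl) hpa

lemma entry_eq {p a b : ℕ} (hp : p.Prime) (hp2 : p ≠ 2) (ha : a ∣ 2 * p) (hb : b ∣ 2 * p) :
    (if a ∣ b ∨ b ∣ a then (1 : ℝ) else 0)
      = 1 - (if a = 2 then (1 : ℝ) else 0) * (if b = p then 1 else 0)
          - (if a = p then (1 : ℝ) else 0) * (if b = 2 then 1 else 0) := by
  have hp3 : 3 ≤ p := by
    have := hp.two_le
    omega
  have h2p : ¬ (2 ∣ p) := fun h => hp2 ((Nat.prime_dvd_prime_iff_eq Nat.prime_two hp).1 h).symm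
  have hpd2 : ¬ (p ∣ 2) := fun h => by
    have := Nat.le_of_dvd (by norm_num) h
    omega
  have d1 : (2 : ℕ) ∣ 2 * p := dvd_mul_right 2 p
  have d2 : p ∣ 2 * p := dvd_mul_left p 2
  have n1 : (1 : ℕ) ≠ 2 := by omega
  have n2 : (1 : ℕ) ≠ p := by omega
  have n3 : (2 : ℕ) ≠ p := by omega
  have n4 : 2 * p ≠ 2 := by omega
  have n5 : 2 * p ≠ p := by omega
  rcases divisor_cases hp hp2 ha with rfl | rfl | rfl | rfl <;>
      rcases divisor_cases hp hp2 hb with rfl | rfl | rfl | rfl <;>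
    simp [d1, d2, h2p, hpd2, n1, n2, n3, n4, n5, n1.symm, n2.symm, n3.symm, n4.symm, n5.symm]

end Arith

noncomputable def Umat (p : ℕ) : Matrix (DihedralGroup p × DihedralGroup p) (Fin 3) ℝ :=
  Matrix.of fun g j =>
    ![(1 : ℝ), if orderOf g = 2 then 1 else 0, if orderOf g = p then 1 else 0] j

noncomputable def Vmat (p : ℕ) : Matrix (Fin 3) (DihedralGroup p × DihedralGroup p) ℝ :=
  Matrix.of fun j h =>
    ![(1 : ℝ), -(if orderOf h = p then 1 else 0), -(if orderOf h = 2 then 1 else 0)] j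

theorem stmt10 (p : ℕ) (hp : Fact p.Prime) (hp2 : p ≠ 2) :
    4 * p ^ 2 - 4 ≤
      Polynomial.rootMultiplicity (-1 : ℝ)
        (Matrix.charpoly
          ((superpowerGraph (DihedralGroup p × DihedralGroup p)).adjMatrix ℝ)) := by
  haveI : NeZero p := ⟨hp.out.ne_zero⟩
  set G := DihedralGroup p × DihedralGroup p
  have hp3 : 3 ≤ p := by
    have := hp.out.two_le
    omega
  have horder : ∀ g : G, orderOf g ∣ 2 * p := by
    intro g
    rw [Prod.orderOf]
    have h1 := orderOf_dvd_card (x := g.1)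
    have h2 := orderOf_dvd_card (x := g.2)
    rw [DihedralGroup.card] at h1 h2
    exact Nat.lcm_dvd h1 h2
  have hM : (superpowerGraph G).adjMatrix ℝ = Umat p * Vmat p - 1 := by
    ext g h
    have hUV : (Umat p * Vmat p) g h
        = 1 - (if orderOf g = 2 then (1 : ℝ) else 0) * (if orderOf h = p then 1 else 0)
            - (if orderOf g = p then (1 : ℝ) else 0) * (if orderOf h = 2 then 1 else 0) := by
      simp [Umat, Vmat, Matrix.mul_apply, Fin.sum_univ_three]
      ring
    rw [SimpleGraph.adjMatrix_apply, Matrix.sub_apply, hUV]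
    by_cases hgh : g = h
    · subst hgh
      rw [if_neg (fun hc => hc.1 rfl), Matrix.one_apply_eq]
      have hne : ¬ (orderOf g = 2 ∧ orderOf g = p) := by
        rintro ⟨h2, hpp⟩
        exact hp2 (h2 ▸ hpp).symm
      by_cases h2 : orderOf g = 2 <;> by_cases hpp : orderOf g = p <;>
        simp_all
    · rw [Matrix.one_apply_ne hgh]
      have hiff : (superpowerGraph G).Adj g h ↔
          (orderOf g ∣ orderOf h ∨ orderOf h ∣ orderOf g) :=
        and_iff_right hgh
      rw [if_congr hiff rfl rfl, sub_zero]
      exact entry_eq hp.out hp2 (horder g) (horder h)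
  have hcardG : Fintype.card G = 4 * p ^ 2 := by
    show Fintype.card (DihedralGroup p × DihedralGroup p) = 4 * p ^ 2
    rw [Fintype.card_prod, DihedralGroup.card]
    ring
  have hdvd := wa_dvd (by rw [hcardG]; simp; nlinarith) (Umat p) (Vmat p)
  rw [hcardG, Fintype.card_fin] at hdvd
  obtain ⟨c, hc⟩ := hdvd
  have hch : ((superpowerGraph G).adjMatrix ℝ).charpoly
      = ((X : ℝ[X]) + 1) ^ (4 * p ^ 2 - 3) * c.comp (X + 1) := by
    rw [hM, charpoly_sub_one, hc, Polynomial.mul_comp, Polynomial.pow_comp, Polynomial.X_comp]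
  have hne0 : ((superpowerGraph G).adjMatrix ℝ).charpoly ≠ 0 :=
    (Matrix.charpoly_monic _).ne_zero
  have hmult : 4 * p ^ 2 - 3 ≤ Polynomial.rootMultiplicity (-1 : ℝ)
      ((superpowerGraph G).adjMatrix ℝ).charpoly := by
    rw [Polynomial.le_rootMultiplicity_iff hne0]
    rw [map_neg, _root_.map_one, sub_neg_eq_add, hch]
    exact Dvd.intro _ rfl
  exact le_trans (by omega : 4 * p ^ 2 - 4 ≤ 4 * p ^ 2 - 3) hmult
end
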